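/- Let E = EuclideanSpace ℝ (Fin 3) and let g : E → E be continuously differentiable on a neighborhood of a point x with g(x) ≠ 0. Suppose the divergence of the vector field y ↦ ‖g(y)‖ • g(y) vanishes at x. Then the divergence at x of the normalized field y ↦ ‖g(y)‖^{−1} • g(y) equals −2 D(x)(g(x)) / ‖g(x)‖², where D(x) denotes the (Fréchet) derivative at x of the function y ↦ ‖g(y)‖. -/

import Mathlib

/-- The divergence of a vector field `F : ℝ³ → ℝ³` at a point `x`, computed as
`∑ᵢ ⟨(fderiv ℝ F x)(eᵢ), eᵢ⟩` in the standard orthonormal basis. -/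
noncomputable def divergence3
    (F : EuclideanSpace ℝ (Fin 3) → EuclideanSpace ℝ (Fin 3))
    (x : EuclideanSpace ℝ (Fin 3)) : ℝ :=
  ∑ i : Fin 3,
    (inner ℝ ((fderiv ℝ F x) (EuclideanSpace.single i (1 : ℝ)))
      (EuclideanSpace.single i (1 : ℝ)) : ℝ)

lemma apply_eq_sum (L : EuclideanSpace ℝ (Fin 3) →L[ℝ] ℝ) (v : EuclideanSpace ℝ (Fin 3)) :
    L v = ∑ i, v i * L (EuclideanSpace.single i (1:ℝ)) := by
  have h := (EuclideanSpace.basisFun (Fin 3) ℝ).sum_repr v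
  conv_lhs => rw [← h]
  rw [map_sum]
  simp [EuclideanSpace.basisFun_apply, EuclideanSpace.basisFun_repr, smul_eq_mul]

lemma div_smul (g : EuclideanSpace ℝ (Fin 3) → EuclideanSpace ℝ (Fin 3))
    (x : EuclideanSpace ℝ (Fin 3)) (hgd : DifferentiableAt ℝ g x)
    (c : EuclideanSpace ℝ (Fin 3) → ℝ) (hc : DifferentiableAt ℝ c x) :
    divergence3 (fun y => c y • g y) x =
      c x * divergence3 g x + fderiv ℝ c x (g x) := by
  have h : HasFDerivAt (fun y => c y • g y) _ x := hc.hasFDerivAt.smul hgd.hasFDerivAt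
  rw [divergence3, h.fderiv]
  rw [divergence3, Finset.mul_sum, apply_eq_sum (fderiv ℝ c x) (g x), ← Finset.sum_add_distrib]
  congr 1; ext i
  simp [real_inner_smul_left, EuclideanSpace.inner_single_right, inner_add_left]
  ring

/-- If `g : ℝ³ → ℝ³` is `C¹` near `x`, `g(x) ≠ 0`, and `div(‖g‖ • g)` vanishes
at `x`, then `div(‖g‖⁻¹ • g)(x) = −2 D(x)(g(x))/‖g(x)‖²`, where `D(x)` is the
Fréchet derivative of `y ↦ ‖g(y)‖` at `x`.  (With `g = ∇u` for a `3`-harmonic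
`u`, this is the mean curvature identity `H = −2⟨∇|∇u|, ∇u⟩/|∇u|²`.) -/
theorem stmt_8 (g : EuclideanSpace ℝ (Fin 3) → EuclideanSpace ℝ (Fin 3))
    (x : EuclideanSpace ℝ (Fin 3))
    (hg : ContDiffAt ℝ 1 g x) (hgx : g x ≠ 0)
    (hdiv : divergence3 (fun y => ‖g y‖ • g y) x = 0) :
    divergence3 (fun y => ‖g y‖⁻¹ • g y) x =
      -2 * (fderiv ℝ (fun y => ‖g y‖) x (g x)) / ‖g x‖ ^ 2 := by
  have hgd : DifferentiableAt ℝ g x := hg.differentiableAt one_ne_zero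
  have hN : DifferentiableAt ℝ (fun y => ‖g y‖) x := hgd.norm ℝ hgx
  have hn : ‖g x‖ ≠ 0 := norm_ne_zero_iff.mpr hgx
  set D := fderiv ℝ (fun y => ‖g y‖) x with hD
  set S := divergence3 g x with hS
  have h1 : ‖g x‖ * S + D (g x) = 0 := by
    rw [← hdiv, div_smul g x hgd _ hN]
  have hinv : HasFDerivAt (fun y => ‖g y‖⁻¹) (-(‖g x‖ ^ 2)⁻¹ • D) x := by
    have h := (hasFDerivAt_inv hn).comp x hN.hasFDerivAt
    refine h.congr_fderiv ?_
    ext v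
    simp [mul_comm, hD]
  have hSv : S = -(D (g x)) / ‖g x‖ := by
    field_simp
    linarith
  rw [div_smul g x hgd _ hinv.differentiableAt, hinv.fderiv]
  rw [← hS, hSv]
  simp only [ContinuousLinearMap.smul_apply, smul_eq_mul]
  field_simp
  ring
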